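/- Let γ ∈ (0,1), μ_n = (log log n)^{−1/2}, and for a fixed x ≥ 0 set a_n = √(2 log(n/(γ log log n))) and z_n = x/a_n + a_n + [ (γ/2 − 1) log log(n/(γ log log n)) − log(2^{−γ/2} Γ(γ)) ] / a_n. Then S¹_n := e^{−z_n²/2} Σ_{i=1}^{⌊n(1−μ_n)⌋} z_n^{γ i/n − 2} / ( 2^{γ i/(2n) − 1} Γ(γ i/n) ) → 0 as n → ∞. -/

import Mathlib

open Filter Real

set_option maxHeartbeats 1000000

lemma aux_one_le_Gamma {s : ℝ} (h0 : 0 < s) (h1 : s ≤ 1) : 1 ≤ Real.Gamma s := by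
  rcases eq_or_lt_of_le h1 with h | h
  · rw [h, Real.Gamma_one]
  · have ht0 : (0:ℝ) < 2 - s := by linarith
    have htpos : 0 < 1 / (2 - s) := by positivity
    have htle : 1 / (2 - s) ≤ 1 := by rw [div_le_one ht0]; linarith
    have h1t : 0 ≤ 1 - 1 / (2 - s) := by linarith
    have ht1 : 1 / (2 - s) + (1 - 1 / (2 - s)) = 1 := by ring
    have hcomb : (1 / (2 - s)) * s + (1 - 1 / (2 - s)) * 2 = 1 := by
      field_simp
      ring
    have hcv := Real.convexOn_log_Gamma.2 (Set.mem_Ioi.2 h0) (Set.mem_Ioi.2 two_pos)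
      htpos.le h1t ht1
    rw [smul_eq_mul, smul_eq_mul, smul_eq_mul, smul_eq_mul, hcomb] at hcv
    simp only [Function.comp_apply, Real.Gamma_one, Real.Gamma_two, Real.log_one,
      mul_zero, add_zero] at hcv
    have hlog : 0 ≤ Real.log (Real.Gamma s) := by
      by_contra hneg
      push_neg at hneg
      nlinarith [mul_pos htpos (neg_pos.2 hneg)]
    have := Real.add_one_le_exp (Real.log (Real.Gamma s))
    rw [Real.exp_log (Real.Gamma_pos_of_pos h0)] at this
    linarith

/-- **Negligibility of the low-index part of the sum in the regime `nβ = 2γ`:**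
with `μ_n = (log log n)^(-1/2)` and `z_n = φ_n(x)`, the partial sum
`S¹_n = e^{-z_n²/2} Σ_{i=1}^{⌊n(1-μ_n)⌋} z_n^{γi/n-2} / (2^{γi/(2n)-1} Γ(γi/n))`
tends to `0`. -/
theorem low_index_sum_negligible (γ : ℝ) (hγ : γ ∈ Set.Ioo (0 : ℝ) 1)
    (μ : ℕ → ℝ)
    (hμ : ∀ n : ℕ, μ n = Real.log (Real.log n) ^ (-(1 / 2) : ℝ))
    (x : ℝ) (hx : 0 ≤ x)
    (a : ℕ → ℝ)
    (ha : ∀ n : ℕ, a n = Real.sqrt (2 * Real.log ((n : ℝ) / (γ * Real.log (Real.log n)))))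
    (z : ℕ → ℝ)
    (hz : ∀ n : ℕ, z n = x / a n + a n
        + ((γ / 2 - 1) * Real.log (Real.log ((n : ℝ) / (γ * Real.log (Real.log n))))
            - Real.log ((2 : ℝ) ^ (-(γ / 2)) * Real.Gamma γ)) / a n) :
    Tendsto (fun n : ℕ =>
        Real.exp (-(z n ^ 2) / 2) *
          ∑ i ∈ Finset.Icc 1 ⌊(n : ℝ) * (1 - μ n)⌋₊,
            z n ^ (γ * (i : ℝ) / n - 2)
              / ((2 : ℝ) ^ (γ * (i : ℝ) / (2 * n) - 1) * Real.Gamma (γ * (i : ℝ) / n)))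
      atTop (nhds 0) := by
  obtain ⟨hγ0, hγ1⟩ := hγ
  -- abbreviations
  set L : ℕ → ℝ := fun n => Real.log (Real.log n) with hLdef
  set M : ℕ → ℝ := fun n => Real.log ((n : ℝ) / (γ * L n)) with hMdef
  set K : ℝ := Real.log ((2 : ℝ) ^ (-(γ / 2)) * Real.Gamma γ) with hKdef
  set c : ℕ → ℝ := fun n => (γ / 2 - 1) * Real.log (M n) - K with hcdef
  set C : ℝ := Real.log 2 + Real.log γ + K + γ / 2 with hCdef
  have hLn : ∀ k : ℕ, L k = Real.log (Real.log k) := fun k => rfl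
  have hMn : ∀ k : ℕ, M k = Real.log ((k : ℝ) / (γ * L k)) := fun k => rfl
  have hcn : ∀ k : ℕ, c k = (γ / 2 - 1) * Real.log (M k) - K := fun k => rfl
  have hCeq : C = Real.log 2 + Real.log γ + K + γ / 2 := rfl
  -- basic limits
  have hlog : Tendsto (fun n : ℕ => Real.log n) atTop atTop :=
    Real.tendsto_log_atTop.comp tendsto_natCast_atTop_atTop
  have hL : Tendsto L atTop atTop :=
    (Real.tendsto_log_atTop.comp hlog).congr fun n => (hLn n).symm
  have hzn : ∀ k : ℕ, z k = x / a k + a k + c k / a k := fun k => by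
    rw [hz k, hcn k, hMn k, hLn k]
  clear_value L M K c C
  -- base eventual facts and consequences
  have hbase : ∀ᶠ n : ℕ in atTop, (2:ℝ) ≤ (n:ℝ) ∧ 4 ≤ L n ∧ 4 ≤ Real.log n := by
    filter_upwards [eventually_ge_atTop 2, hL.eventually_ge_atTop 4,
      hlog.eventually_ge_atTop 4] with n h1 h2 h3
    exact ⟨by exact_mod_cast h1, h2, h3⟩
  have hlog2 : Real.log 2 ≤ 1 := by
    have := Real.log_le_sub_one_of_pos (by norm_num : (0:ℝ) < 2)
    linarith
  have hMfacts : ∀ᶠ n : ℕ in atTop,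
      (1/4) * Real.log n ≤ M n ∧ 1 ≤ M n ∧ L n - 2 ≤ Real.log (M n) ∧
        M n = Real.log n - (Real.log γ + Real.log (L n)) := by
    filter_upwards [hbase] with n ⟨hn2, hL4, hln4⟩
    have npos : (0:ℝ) < (n:ℝ) := by linarith
    have hLpos : (0:ℝ) < L n := by linarith
    have hγL : 0 < γ * L n := mul_pos hγ0 hLpos
    have hMeq : M n = Real.log n - (Real.log γ + Real.log (L n)) := by
      rw [hMn n, Real.log_div npos.ne' hγL.ne', Real.log_mul hγ0.ne' hLpos.ne']
    have hsq : Real.sqrt n * Real.sqrt n = (n:ℝ) := Real.mul_self_sqrt npos.le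
    have hsqrtpos : 0 < Real.sqrt n := Real.sqrt_pos.2 npos
    have hlogsqrt : Real.log (Real.sqrt n) = Real.log n / 2 := Real.log_sqrt npos.le
    have hln_le : Real.log n ≤ 2 * Real.sqrt n := by
      have := Real.log_le_sub_one_of_pos hsqrtpos
      rw [hlogsqrt] at this
      linarith
    have hL_le : L n ≤ Real.log n := by
      have := Real.log_le_sub_one_of_pos (by linarith : (0:ℝ) < Real.log n)
      rw [hLn n]
      linarith
    have hγL_le : γ * L n ≤ 2 * Real.sqrt n := by
      nlinarith
    have hdivge : Real.sqrt n / 2 ≤ (n:ℝ) / (γ * L n) := by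
      rw [div_le_div_iff₀ (by norm_num) hγL]
      nlinarith
    have hMlb : Real.log n / 2 - Real.log 2 ≤ M n := by
      have h1 : Real.log (Real.sqrt n / 2) ≤ M n := by
        rw [hMn n]
        exact Real.log_le_log (by positivity) hdivge
      rw [Real.log_div hsqrtpos.ne' (by norm_num), hlogsqrt] at h1
      linarith
    have hM4 : (1/4) * Real.log n ≤ M n := by nlinarith
    have hM1 : 1 ≤ M n := by nlinarith
    refine ⟨hM4, hM1, ?_, hMeq⟩
    have h2 : Real.log ((1/4) * Real.log n) ≤ Real.log (M n) :=
      Real.log_le_log (by positivity) hM4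
    have h3 : Real.log ((1/4) * Real.log n) = L n - Real.log 4 := by
      rw [show (1/4) * Real.log n = Real.log n / 4 by ring,
        Real.log_div (by positivity) (by norm_num), hLn n]
    have h4 : Real.log 4 ≤ 2 := by
      rw [show (4:ℝ) = 2 * 2 by norm_num, Real.log_mul (by norm_num) (by norm_num)]
      linarith
    rw [h3] at h2
    linarith
  have hM : Tendsto M atTop atTop := by
    refine tendsto_atTop_mono' atTop ?_ (hlog.const_mul_atTop (by norm_num : (0:ℝ) < 1/4))
    filter_upwards [hMfacts] with n hn
    exact hn.1
  have hsqrt2 : (1:ℝ) < Real.sqrt 2 := by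
    nlinarith [Real.sq_sqrt (by norm_num : (0:ℝ) ≤ 2), Real.sqrt_nonneg 2]
  have hreal : ∀ᶠ t : ℝ in atTop,
      Real.log t + (|K| + x) ≤ Real.sqrt (2 * t) ∧ 8 ≤ t := by
    have hsqrtT : Tendsto Real.sqrt atTop atTop := by
      rw [show Real.sqrt = fun t : ℝ => t ^ ((1:ℝ)/2) from funext fun t => Real.sqrt_eq_rpow t]
      exact tendsto_rpow_atTop (by norm_num)
    have hb := (isLittleO_log_rpow_atTop (by norm_num : (0:ℝ) < 1/2)).bound one_pos
    have hc := ((hsqrtT.const_mul_atTop (by linarith : (0:ℝ) < Real.sqrt 2 - 1)).eventually_ge_atTop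
      (|K| + x))
    filter_upwards [hb, hc, eventually_ge_atTop (8:ℝ)] with t h1 h2 h3
    have htpos : (0:ℝ) < t := by linarith
    have hnorm : Real.log t ≤ t ^ ((1:ℝ)/2) := by
      calc Real.log t ≤ ‖Real.log t‖ := le_abs_self _
        _ ≤ 1 * ‖t ^ ((1:ℝ)/2)‖ := h1
        _ = t ^ ((1:ℝ)/2) := by
            rw [one_mul, Real.norm_eq_abs, abs_of_nonneg (Real.rpow_nonneg htpos.le _)]
    have hs : Real.sqrt (2 * t) = Real.sqrt 2 * Real.sqrt t :=
      Real.sqrt_mul (by norm_num) t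
    have ht12 : t ^ ((1:ℝ)/2) = Real.sqrt t := (Real.sqrt_eq_rpow t).symm
    rw [ht12] at hnorm
    refine ⟨?_, h3⟩
    rw [hs]
    nlinarith [Real.sqrt_nonneg t]
  have hMreal := hM.eventually hreal
  -- key pointwise facts at large n
  have hkey : ∀ᶠ n : ℕ in atTop,
      1 ≤ z n ∧ 0 < (n:ℝ) ∧ 0 < L n ∧
      Real.exp (-(z n ^ 2) / 2) ≤ Real.exp (-(M n + c n)) ∧
      Real.log (M n) / 2 ≤ Real.log (z n) ∧
      (1/4) * Real.log n ≤ M n ∧ 1 ≤ M n ∧ L n - 2 ≤ Real.log (M n) ∧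
      M n = Real.log n - (Real.log γ + Real.log (L n)) ∧ 4 ≤ L n := by
    filter_upwards [hbase, hMfacts, hMreal] with n ⟨hn2, hL4, hln4⟩
      ⟨hM4, hM1, hlogM, hMeq⟩ ⟨hMa, hM8⟩
    have npos : (0:ℝ) < (n:ℝ) := by linarith
    have hLpos : (0:ℝ) < L n := by linarith
    have hMpos : (0:ℝ) < M n := by linarith
    have hlogMnn : 0 ≤ Real.log (M n) := Real.log_nonneg hM1
    have han : a n = Real.sqrt (2 * M n) := by rw [ha n, hMn n, hLn n]
    have hapos : 0 < a n := by rw [han]; exact Real.sqrt_pos.2 (by linarith)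
    have ha2 : a n ^ 2 = 2 * M n := by rw [han]; exact Real.sq_sqrt (by linarith)
    have ha4 : 4 ≤ a n := by
      rw [han, show (4:ℝ) = Real.sqrt 16 by
        rw [show (16:ℝ) = 4 ^ 2 by norm_num, Real.sqrt_sq (by norm_num)]]
      exact Real.sqrt_le_sqrt (by linarith)
    have hcK : -(Real.log (M n) + |K|) ≤ c n := by
      rw [hcn n]
      have h1 : (-1 : ℝ) * Real.log (M n) ≤ (γ/2 - 1) * Real.log (M n) :=
        mul_le_mul_of_nonneg_right (by linarith) hlogMnn
      linarith [neg_abs_le K, le_abs_self K]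
    have haK : Real.log (M n) + (|K| + x) ≤ a n := by rw [han]; exact hMa
    have hxc : -(a n) ≤ x + c n := by linarith
    have hzn' : z n = a n + (x + c n) / a n := by
      rw [hzn n]
      field_simp
      ring
    have hwge : -1 ≤ (x + c n) / a n := by
      rw [le_div_iff₀ hapos]
      linarith
    have hzlb : a n - 1 ≤ z n := by rw [hzn']; linarith
    have hz3 : 3 ≤ z n := by linarith
    have hzpos : 0 < z n := by linarith
    have hz1 : 1 ≤ z n := by linarith
    have hz2 : z n ^ 2 = a n ^ 2 + 2 * (x + c n) + ((x + c n) / a n) ^ 2 := by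
      rw [hzn']
      field_simp
      ring
    have hexpz : Real.exp (-(z n ^ 2) / 2) ≤ Real.exp (-(M n + c n)) := by
      apply Real.exp_le_exp.2
      nlinarith [sq_nonneg ((x + c n) / a n)]
    have hz2M : M n ≤ z n ^ 2 := by nlinarith
    have hlogz : Real.log (M n) / 2 ≤ Real.log (z n) := by
      have h1 : Real.log (M n) ≤ Real.log (z n ^ 2) := Real.log_le_log hMpos hz2M
      rw [Real.log_pow] at h1
      push_cast at h1
      linarith
    exact ⟨hz1, npos, hLpos, hexpz, hlogz, hM4, hM1, hlogM, hMeq, hL4⟩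
  -- the bounding function tends to 0
  have hh : Tendsto (fun n : ℕ =>
      Real.exp (C + Real.log (L n) - γ/2 * (L n) ^ ((1:ℝ)/2))) atTop (nhds 0) := by
    have hexparg : Tendsto (fun t : ℝ => C + Real.log t - γ/2 * t ^ ((1:ℝ)/2)) atTop atBot := by
      have hb := (isLittleO_log_rpow_atTop (by norm_num : (0:ℝ) < 1/2)).bound
        (by positivity : (0:ℝ) < γ/4)
      have hmain : Tendsto (fun t : ℝ => C + t ^ ((1:ℝ)/2) * (-(γ/4))) atTop atBot := by
        refine tendsto_atBot_add_const_left _ C ?_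
        exact (tendsto_rpow_atTop (by norm_num)).atTop_mul_const_of_neg (by linarith)
      refine tendsto_atBot_mono' atTop ?_ hmain
      filter_upwards [hb, eventually_ge_atTop (1:ℝ)] with t h1 ht1
      have htpos : (0:ℝ) < t := by linarith
      have hlt : Real.log t ≤ γ/4 * t ^ ((1:ℝ)/2) := by
        calc Real.log t ≤ ‖Real.log t‖ := le_abs_self _
          _ ≤ γ/4 * ‖t ^ ((1:ℝ)/2)‖ := h1
          _ = γ/4 * t ^ ((1:ℝ)/2) := by
              rw [Real.norm_eq_abs, abs_of_nonneg (Real.rpow_nonneg htpos.le _)]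
      nlinarith
    exact Real.tendsto_exp_atBot.comp (hexparg.comp hL)
  -- squeeze
  refine tendsto_of_tendsto_of_tendsto_of_le_of_le' tendsto_const_nhds hh ?_ ?_
  · -- nonnegativity
    filter_upwards [hkey] with n hk
    obtain ⟨hz1, npos, -⟩ := hk
    refine mul_nonneg (Real.exp_nonneg _) (Finset.sum_nonneg fun i hi => ?_)
    obtain ⟨hi1, hi2⟩ := Finset.mem_Icc.1 hi
    have hipos : (0:ℝ) < (i:ℝ) := by exact_mod_cast hi1
    have hspos : 0 < γ * (i:ℝ) / n := by positivity
    exact div_nonneg (Real.rpow_nonneg (by linarith) _)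
      (mul_nonneg (Real.rpow_nonneg (by norm_num) _) (Real.Gamma_pos_of_pos hspos).le)
  · -- the main upper bound
    filter_upwards [hkey] with n hk
    obtain ⟨hz1, npos, hLpos, hexpz, hlogz, hM4, hM1, hlogM, hMeq, hL4⟩ := hk
    have hzpos : (0:ℝ) < z n := by linarith
    have hMpos : (0:ℝ) < M n := by linarith
    have hlogznn : 0 ≤ Real.log (z n) := Real.log_nonneg hz1
    have hμn : μ n = (L n) ^ (-(1/2) : ℝ) := by rw [hμ n, hLn n]
    have hμpos : 0 < μ n := by rw [hμn]; positivity
    have hLhalf : 2 ≤ (L n) ^ ((1:ℝ)/2) := by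
      have h1 : (4:ℝ) ^ ((1:ℝ)/2) ≤ (L n) ^ ((1:ℝ)/2) :=
        Real.rpow_le_rpow (by norm_num) hL4 (by norm_num)
      have h2 : (4:ℝ) ^ ((1:ℝ)/2) = 2 := by
        rw [show (4:ℝ) = 2 ^ (2:ℕ) by norm_num, ← Real.rpow_natCast 2 2,
          ← Real.rpow_mul (by norm_num)]
        norm_num
      linarith
    have hμhalf : μ n ≤ 1/2 := by
      have hinv := inv_anti₀ (by norm_num : (0:ℝ) < 2) hLhalf
      rw [hμn, Real.rpow_neg hLpos.le]
      linarith [hinv]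
    have h1μ : 0 ≤ 1 - μ n := by linarith
    have hμL : (L n) ^ ((1:ℝ)/2) - 1 ≤ μ n * Real.log (M n) := by
      have h1 : μ n * (L n - 2) ≤ μ n * Real.log (M n) :=
        mul_le_mul_of_nonneg_left hlogM hμpos.le
      have h2 : μ n * L n = (L n) ^ ((1:ℝ)/2) := by
        calc μ n * L n = L n ^ (-(1/2) : ℝ) * L n ^ (1:ℝ) := by rw [hμn, Real.rpow_one]
          _ = L n ^ (-(1/2) + 1 : ℝ) := (Real.rpow_add hLpos _ _).symm
          _ = L n ^ ((1:ℝ)/2) := by norm_num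
      nlinarith
    -- sum bound
    set m : ℕ := ⌊(n : ℝ) * (1 - μ n)⌋₊ with hmdef
    have hr0 : 0 ≤ (n:ℝ) * (1 - μ n) := mul_nonneg npos.le h1μ
    have hmr : (m : ℝ) ≤ (n:ℝ) * (1 - μ n) := Nat.floor_le hr0
    have hmn : (m : ℝ) ≤ (n : ℝ) := by nlinarith
    have hterm : ∀ i ∈ Finset.Icc 1 m,
        z n ^ (γ * (i : ℝ) / n - 2)
          / ((2 : ℝ) ^ (γ * (i : ℝ) / (2 * n) - 1) * Real.Gamma (γ * (i : ℝ) / n))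
        ≤ z n ^ (γ * (1 - μ n) - 2) * 2 := by
      intro i hi
      obtain ⟨hi1, hi2⟩ := Finset.mem_Icc.1 hi
      have hipos : (0:ℝ) < (i:ℝ) := by exact_mod_cast hi1
      have hile : (i : ℝ) ≤ (n:ℝ) * (1 - μ n) :=
        le_trans (by exact_mod_cast Nat.cast_le.2 hi2) hmr
      have hspos : 0 < γ * (i:ℝ) / n := by positivity
      have hsle : γ * (i:ℝ) / n ≤ γ * (1 - μ n) := by
        rw [div_le_iff₀ npos]
        nlinarith
      have hsle1 : γ * (i:ℝ) / n ≤ 1 := by nlinarith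
      have hGamma : 1 ≤ Real.Gamma (γ * (i:ℝ) / n) := aux_one_le_Gamma hspos hsle1
      have hA : (1:ℝ)/2 ≤ (2 : ℝ) ^ (γ * (i : ℝ) / (2 * n) - 1) := by
        have h1 : (2:ℝ) ^ (-1 : ℝ) ≤ (2 : ℝ) ^ (γ * (i : ℝ) / (2 * n) - 1) := by
          apply Real.rpow_le_rpow_of_exponent_le one_le_two
          have : 0 ≤ γ * (i : ℝ) / (2 * n) := by positivity
          linarith
        rw [Real.rpow_neg_one] at h1
        rw [show (1:ℝ)/2 = (2:ℝ)⁻¹ by norm_num]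
        exact h1
      have hApos : (0:ℝ) < (2 : ℝ) ^ (γ * (i : ℝ) / (2 * n) - 1) :=
        Real.rpow_pos_of_pos (by norm_num) _
      have hze : z n ^ (γ * (i : ℝ) / n - 2) ≤ z n ^ (γ * (1 - μ n) - 2) :=
        Real.rpow_le_rpow_of_exponent_le hz1 (by linarith)
      have hden : (1:ℝ)/2 ≤ (2 : ℝ) ^ (γ * (i : ℝ) / (2 * n) - 1)
          * Real.Gamma (γ * (i:ℝ) / n) := by
        calc (1:ℝ)/2 = (1/2) * 1 := by ring
          _ ≤ (2 : ℝ) ^ (γ * (i : ℝ) / (2 * n) - 1) * Real.Gamma (γ * (i:ℝ) / n) :=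
            mul_le_mul hA hGamma zero_le_one hApos.le
      calc z n ^ (γ * (i : ℝ) / n - 2)
            / ((2 : ℝ) ^ (γ * (i : ℝ) / (2 * n) - 1) * Real.Gamma (γ * (i : ℝ) / n))
          ≤ z n ^ (γ * (1 - μ n) - 2) / (1/2) :=
            div_le_div₀ (Real.rpow_nonneg hzpos.le _) hze (by norm_num) hden
        _ = z n ^ (γ * (1 - μ n) - 2) * 2 := by ring
    have hsum : (∑ i ∈ Finset.Icc 1 m,
        z n ^ (γ * (i : ℝ) / n - 2)
          / ((2 : ℝ) ^ (γ * (i : ℝ) / (2 * n) - 1) * Real.Gamma (γ * (i : ℝ) / n)))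
        ≤ (n:ℝ) * (z n ^ (γ * (1 - μ n) - 2) * 2) := by
      have hcard := Finset.sum_le_card_nsmul (Finset.Icc 1 m)
        (fun i => z n ^ (γ * (i : ℝ) / n - 2)
          / ((2 : ℝ) ^ (γ * (i : ℝ) / (2 * n) - 1) * Real.Gamma (γ * (i : ℝ) / n)))
        (z n ^ (γ * (1 - μ n) - 2) * 2) hterm
      have hcard2 : (Finset.Icc 1 m).card = m := by
        rw [Nat.card_Icc]
        omega
      have hbz : (0:ℝ) ≤ z n ^ (γ * (1 - μ n) - 2) * 2 := by positivity
      calc (∑ i ∈ Finset.Icc 1 m,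
          z n ^ (γ * (i : ℝ) / n - 2)
            / ((2 : ℝ) ^ (γ * (i : ℝ) / (2 * n) - 1) * Real.Gamma (γ * (i : ℝ) / n)))
          ≤ (Finset.Icc 1 m).card • (z n ^ (γ * (1 - μ n) - 2) * 2) := hcard
        _ = (m : ℝ) * (z n ^ (γ * (1 - μ n) - 2) * 2) := by
            rw [hcard2, nsmul_eq_mul]
        _ ≤ (n:ℝ) * (z n ^ (γ * (1 - μ n) - 2) * 2) :=
            mul_le_mul_of_nonneg_right hmn hbz
    have hsum0 : (0:ℝ) ≤ ∑ i ∈ Finset.Icc 1 m,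
        z n ^ (γ * (i : ℝ) / n - 2)
          / ((2 : ℝ) ^ (γ * (i : ℝ) / (2 * n) - 1) * Real.Gamma (γ * (i : ℝ) / n)) := by
      refine Finset.sum_nonneg fun i hi => ?_
      obtain ⟨hi1, -⟩ := Finset.mem_Icc.1 hi
      have hipos : (0:ℝ) < (i:ℝ) := by exact_mod_cast hi1
      have hspos : 0 < γ * (i:ℝ) / n := by positivity
      exact div_nonneg (Real.rpow_nonneg hzpos.le _)
        (mul_nonneg (Real.rpow_nonneg (by norm_num) _) (Real.Gamma_pos_of_pos hspos).le)
    have hSle : Real.exp (-(z n ^ 2) / 2) *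
        (∑ i ∈ Finset.Icc 1 m,
          z n ^ (γ * (i : ℝ) / n - 2)
            / ((2 : ℝ) ^ (γ * (i : ℝ) / (2 * n) - 1) * Real.Gamma (γ * (i : ℝ) / n)))
        ≤ Real.exp (-(M n + c n)) * ((n:ℝ) * (z n ^ (γ * (1 - μ n) - 2) * 2)) :=
      mul_le_mul hexpz hsum hsum0 (Real.exp_nonneg _)
    have hrw : Real.exp (-(M n + c n)) * ((n:ℝ) * (z n ^ (γ * (1 - μ n) - 2) * 2))
        = Real.exp (-(M n + c n) + Real.log n
            + Real.log (z n) * (γ * (1 - μ n) - 2) + Real.log 2) := by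
      rw [Real.exp_add, Real.exp_add, Real.exp_add, Real.exp_log npos,
        Real.exp_log (by norm_num : (0:ℝ) < 2), Real.rpow_def_of_pos hzpos]
      ring
    have hexpo : -(M n + c n) + Real.log n + Real.log (z n) * (γ * (1 - μ n) - 2) + Real.log 2
        ≤ C + Real.log (L n) - γ/2 * (L n) ^ ((1:ℝ)/2) := by
      have t1 : (γ - 2) * Real.log (z n) ≤ (γ - 2) * (Real.log (M n) / 2) :=
        mul_le_mul_of_nonpos_left hlogz (by linarith)
      have t2 : μ n * (Real.log (M n) / 2) ≤ μ n * Real.log (z n) :=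
        mul_le_mul_of_nonneg_left hlogz hμpos.le
      have t3 : γ * (μ n * (Real.log (M n) / 2)) ≤ γ * (μ n * Real.log (z n)) :=
        mul_le_mul_of_nonneg_left t2 hγ0.le
      have t4 : γ/2 * ((L n) ^ ((1:ℝ)/2) - 1) ≤ γ/2 * (μ n * Real.log (M n)) :=
        mul_le_mul_of_nonneg_left hμL (by linarith)
      have expand : Real.log (z n) * (γ * (1 - μ n) - 2)
          = (γ - 2) * Real.log (z n) - γ * (μ n * Real.log (z n)) := by ring
      rw [hcn n, hCeq]
      nlinarith [t1, t3, t4, expand, hMeq]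
    calc Real.exp (-(z n ^ 2) / 2) *
        (∑ i ∈ Finset.Icc 1 m,
          z n ^ (γ * (i : ℝ) / n - 2)
            / ((2 : ℝ) ^ (γ * (i : ℝ) / (2 * n) - 1) * Real.Gamma (γ * (i : ℝ) / n)))
        ≤ Real.exp (-(M n + c n)) * ((n:ℝ) * (z n ^ (γ * (1 - μ n) - 2) * 2)) := hSle
      _ = Real.exp (-(M n + c n) + Real.log n
            + Real.log (z n) * (γ * (1 - μ n) - 2) + Real.log 2) := hrw
      _ ≤ Real.exp (C + Real.log (L n) - γ/2 * (L n) ^ ((1:ℝ)/2)) := Real.exp_le_exp.2 hexpo
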